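/- Let (D, V, X) have joint density and let D^t = H_t^{-1}(F_D(D)) with H_t(d) = F_D(d) + t(G_D(d) − F_D(d)), where F_D is continuous, strictly increasing with density f_D > 0. If C is the copula of (D^t, V, X) with C(H_t(d), F_V(v), F_X(x)) = F_{D^t,V,X}(d,v,x), then ∂_t C(H_t(d), F_V(v), F_X(x))|_{t=0} = F_{V,X|D}(v,x|d)·(G_D(d) − F_D(d)). -/

import Mathlib

open Filter Topology Set MeasureTheory ProbabilityTheory

/-- derivative of the copula of `(D^t, V, X)` under the marginal
perturbation `H_t = F_D + t(G_D − F_D)`, `D^t = H_t⁻¹(F_D(D))`. If `C` is the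
copula with `C(H_t(d), F_V(v), F_X(x)) = F_{D^t,V,X}(d,v,x)`, then
`∂_t C(H_t(d), F_V(v), F_X(x))|_{t=0} = F_{V,X|D}(v,x|d)·(G_D(d) − F_D(d))`. -/
theorem copula_derivative_triangular
    {Ω : Type*} [MeasureSpace Ω] [IsProbabilityMeasure (ℙ : Measure Ω)]
    (D V X : Ω → ℝ) (hD : Measurable D) (hV : Measurable V) (hX : Measurable X)
    (F G f FV FX : ℝ → ℝ) (FVXgD : ℝ → ℝ → ℝ → ℝ) -- F_D, G_D, f_D, F_V, F_X, F_{V,X|D}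
    (hF : ∀ d, F d = (ℙ {ω | D ω ≤ d}).toReal)
    (hFV : ∀ v, FV v = (ℙ {ω | V ω ≤ v}).toReal)
    (hFX : ∀ x, FX x = (ℙ {ω | X ω ≤ x}).toReal)
    (hGcdf : Monotone G)
    (hFcont : Continuous F) (hFmono : StrictMono F)
    (hf : ∀ d, HasDerivAt F (f d) d) (hfpos : ∀ d, 0 < f d)
    -- conditional CDF of (V,X) given D, via
    -- ∂_d F_{D,V,X}(d,v,x) = F_{V,X|D}(v,x|d) f_D(d)
    (hFVXgD : ∀ d v x,
      HasDerivAt (fun a => (ℙ {ω | D ω ≤ a ∧ V ω ≤ v ∧ X ω ≤ x}).toReal)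
        (FVXgD v x d * f d) d)
    (H : ℝ → ℝ → ℝ)
    (hH : ∀ t d, H t d = F d + t * (G d - F d))
    (Hinv : ℝ → ℝ → ℝ)
    (hHinv : ∀ t u, Hinv t u = sInf {a : ℝ | u ≤ H t a})
    -- Sklar: C is the copula of (D^t, V, X)
    (C : ℝ → ℝ → ℝ → ℝ)
    (hC : ∀ t ∈ Icc (0:ℝ) 1, ∀ d v x,
      C (H t d) (FV v) (FX x)
        = (ℙ {ω | Hinv t (F (D ω)) ≤ d ∧ V ω ≤ v ∧ X ω ≤ x}).toReal)
    (d v x : ℝ) :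
    HasDerivWithinAt (fun t => C (H t d) (FV v) (FX x))
      (FVXgD v x d * (G d - F d)) (Ici (0:ℝ)) 0 := by
  classical
  set s : ℝ := G d - F d with hs
  set J : ℝ → ℝ := fun a => (ℙ {ω | D ω ≤ a ∧ V ω ≤ v ∧ X ω ≤ x}).toReal with hJ
  -- Step A : Hinv 0 is a left inverse of F
  have hq0 : ∀ y : ℝ, Hinv 0 (F y) = y := by
    intro y
    rw [hHinv]
    have hset : {a : ℝ | F y ≤ H 0 a} = Ici y := by
      ext a
      simp [hH, hFmono.le_iff_le]
    rw [hset, csInf_Ici]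
  -- Step B : C on the range of F
  have hC0 : ∀ a : ℝ, C (F a) (FV v) (FX x) = J a := by
    intro a
    have h := hC 0 (by norm_num) a v x
    have hH0 : H 0 a = F a := by rw [hH]; ring
    rw [hH0] at h
    have hset : {ω | Hinv 0 (F (D ω)) ≤ a ∧ V ω ≤ v ∧ X ω ≤ x}
        = {ω | D ω ≤ a ∧ V ω ≤ v ∧ X ω ≤ x} := by
      ext ω; rw [Set.mem_setOf_eq, Set.mem_setOf_eq, hq0 (D ω)]
    rw [hset] at h
    exact h
  -- Step C : F ∘ Hinv 0 = id near F d
  have hE : ∀ᶠ u in 𝓝 (F d), F (Hinv 0 u) = u := by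
    have hmem : Ioo (F (d - 1)) (F (d + 1)) ∈ 𝓝 (F d) :=
      Ioo_mem_nhds (hFmono (by linarith)) (hFmono (by linarith))
    filter_upwards [hmem] with u hu
    have hsub : Icc (F (d - 1)) (F (d + 1)) ⊆ F '' Icc (d - 1) (d + 1) :=
      intermediate_value_Icc (by linarith) hFcont.continuousOn
    obtain ⟨y, _, hy⟩ := hsub ⟨le_of_lt hu.1, le_of_lt hu.2⟩
    rw [← hy, hq0 y]
  -- Step D : continuity of Hinv 0 at F d
  have hcont : ContinuousAt (Hinv 0) (F d) := by
    rw [Metric.continuousAt_iff]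
    intro ε hε
    refine ⟨min (F d - F (d - ε / 2)) (F (d + ε / 2) - F d), ?_, ?_⟩
    · exact lt_min (by linarith [hFmono (show d - ε / 2 < d by linarith)])
        (by linarith [hFmono (show d < d + ε / 2 by linarith)])
    · intro u hu
      rw [Real.dist_eq] at hu
      have h1 : F (d - ε / 2) < u := by
        have := abs_lt.mp (lt_of_lt_of_le hu (min_le_left _ _))
        linarith [this.1]
      have h2 : u < F (d + ε / 2) := by
        have := abs_lt.mp (lt_of_lt_of_le hu (min_le_right _ _))
        linarith [this.2]
      have hsub : Icc (F (d - ε / 2)) (F (d + ε / 2)) ⊆ F '' Icc (d - ε / 2) (d + ε / 2) :=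
        intermediate_value_Icc (by linarith) hFcont.continuousOn
      obtain ⟨y, hyI, hy⟩ := hsub ⟨le_of_lt h1, le_of_lt h2⟩
      rw [← hy, hq0 y, hq0 d, Real.dist_eq]
      have := hyI.1; have := hyI.2
      rw [abs_lt]; constructor <;> linarith
  -- Step E : derivative of Hinv 0 at F d
  have hfd : HasDerivAt F (f d) (Hinv 0 (F d)) := by rw [hq0 d]; exact hf d
  have hqderiv : HasDerivAt (Hinv 0) (f d)⁻¹ (F d) :=
    hfd.of_local_left_inverse hcont (ne_of_gt (hfpos d)) hE
  -- Step F : the inner affine path and composition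
  have hu : HasDerivAt (fun t : ℝ => F d + t * s) s 0 := by
    simpa using ((hasDerivAt_id (0:ℝ)).mul_const s).const_add (F d)
  have hψ : HasDerivAt (fun t : ℝ => Hinv 0 (F d + t * s)) ((f d)⁻¹ * s) 0 := by
    have hq' : HasDerivAt (Hinv 0) (f d)⁻¹ (F d + 0 * s) := by
      rw [show F d + 0 * s = F d by ring]; exact hqderiv
    exact hq'.comp 0 hu
  have hψ0 : Hinv 0 (F d + 0 * s) = d := by
    rw [show F d + 0 * s = F d by ring, hq0 d]
  -- Step G : derivative of J ∘ ψ
  have hJd : HasDerivAt J (FVXgD v x d * f d) (Hinv 0 (F d + 0 * s)) := by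
    rw [hψ0]; exact hFVXgD d v x
  have hJψ : HasDerivAt (fun t : ℝ => J (Hinv 0 (F d + t * s)))
      (FVXgD v x d * f d * ((f d)⁻¹ * s)) 0 := by
    have h := hJd.comp 0 hψ
    exact h
  have hval : FVXgD v x d * f d * ((f d)⁻¹ * s) = FVXgD v x d * s := by
    rw [mul_assoc, ← mul_assoc (f d), mul_inv_cancel₀ (ne_of_gt (hfpos d)), one_mul]
  rw [hval] at hJψ
  -- Step H : eventual equality near 0
  have htend : Filter.Tendsto (fun t : ℝ => F d + t * s) (𝓝 0) (𝓝 (F d)) := by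
    have : Continuous (fun t : ℝ => F d + t * s) := by continuity
    simpa using this.tendsto 0
  have hEt : ∀ᶠ t in 𝓝 (0:ℝ), F (Hinv 0 (F d + t * s)) = F d + t * s :=
    htend.eventually hE
  have heq : ∀ᶠ t in 𝓝[Ici (0:ℝ)] 0,
      C (H t d) (FV v) (FX x) = J (Hinv 0 (F d + t * s)) := by
    filter_upwards [nhdsWithin_le_nhds hEt] with t ht
    have h1 : H t d = F (Hinv 0 (F d + t * s)) := by rw [hH, ht]
    rw [h1, hC0]
  have heq0 : C (H 0 d) (FV v) (FX x) = J (Hinv 0 (F d + 0 * s)) := by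
    have h1 : H 0 d = F d := by rw [hH]; ring
    rw [h1, hψ0, show F d = F d from rfl]
    exact hC0 d
  exact (hJψ.hasDerivWithinAt).congr_of_eventuallyEq heq heq0
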